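/- Let (X,S) be a non-degenerate, involutive and braided set-theoretical solution on a finite set X, and let M be its structure monoid. Then for any two distinct x, y ∈ X, the equality x·g_x^{-1}(y) = y·g_y^{-1}(x) holds in M, and this common element is a right lcm of x and y in M. In particular any two generators admit a right lcm represented by a word of length two, and the set X ∪ {1} is closed under right complement. -/

import Mathlib

namespace YBE

/-- `(X,S)` is non-degenerate: all the maps `g_x = y ↦ S(x,y).1` and
`f_y = x ↦ S(x,y).2` are bijective. -/
def Nondegenerate {X : Type*} (S : X × X → X × X) : Prop :=
  (∀ x : X, Function.Bijective fun y => (S (x, y)).1) ∧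
  (∀ y : X, Function.Bijective fun x => (S (x, y)).2)

/-- `(X,S)` is involutive: `S ∘ S = id`. -/
def InvolutiveSol {X : Type*} (S : X × X → X × X) : Prop := S ∘ S = id

/-- `S¹² = S × id` on `X × X × X`. -/
def S12 {X : Type*} (S : X × X → X × X) : X × X × X → X × X × X :=
  fun p => ((S (p.1, p.2.1)).1, (S (p.1, p.2.1)).2, p.2.2)

/-- `S²³ = id × S` on `X × X × X`. -/
def S23 {X : Type*} (S : X × X → X × X) : X × X × X → X × X × X :=
  fun p => (p.1, S (p.2.1, p.2.2))

/-- `(X,S)` is braided: `S¹² ∘ S²³ ∘ S¹² = S²³ ∘ S¹² ∘ S²³`. -/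
def BraidedSol {X : Type*} (S : X × X → X × X) : Prop :=
  S12 S ∘ S23 S ∘ S12 S = S23 S ∘ S12 S ∘ S23 S

/-- The map `g_x : y ↦ S(x,y).1`. -/
def gmap {X : Type*} (S : X × X → X × X) (x : X) : X → X := fun y => (S (x, y)).1

/-- The map `f_y : x ↦ S(x,y).2`. -/
def fmap {X : Type*} (S : X × X → X × X) (y : X) : X → X := fun x => (S (x, y)).2

/-- The inverse `g_x⁻¹` of the (bijective) map `g_x`. -/
noncomputable def ginv {X : Type*} [Nonempty X] (S : X × X → X × X) (x : X) : X → X :=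
  Function.invFun (gmap S x)

/-- The inverse `f_y⁻¹` of the (bijective) map `f_y`. -/
noncomputable def finv {X : Type*} [Nonempty X] (S : X × X → X × X) (y : X) : X → X :=
  Function.invFun (fmap S y)

/-- The defining relations of the structure monoid: `x·y = t·z` whenever `S(x,y) = (t,z)`. -/
def ybRel {X : Type*} (S : X × X → X × X) : FreeMonoid X → FreeMonoid X → Prop :=
  fun a b => ∃ x y : X, a = FreeMonoid.of x * FreeMonoid.of y ∧
    b = FreeMonoid.of (S (x, y)).1 * FreeMonoid.of (S (x, y)).2

/-- The structure monoid of `(X,S)`: the monoid presented by generating set `X` and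
relations `x·y = t·z` for each `x,y,t,z` with `S(x,y) = (t,z)`. -/
abbrev StructureMonoid {X : Type*} (S : X × X → X × X) : Type _ :=
  (conGen (ybRel S)).Quotient

/-- The image in the structure monoid of a generator `x ∈ X`. -/
def smi {X : Type*} (S : X × X → X × X) (x : X) : StructureMonoid S :=
  (conGen (ybRel S)).mk' (FreeMonoid.of x)

/-- The defining relations of the structure group, as elements of the free group. -/
def ybGRels {X : Type*} (S : X × X → X × X) : Set (FreeGroup X) :=
  {w | ∃ x y : X, w = FreeGroup.of x * FreeGroup.of y *
    (FreeGroup.of (S (x, y)).1 * FreeGroup.of (S (x, y)).2)⁻¹}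

/-- The structure group of `(X,S)`: the group presented by generating set `X` and
relations `x·y = t·z` for each `x,y,t,z` with `S(x,y) = (t,z)`. -/
abbrev StructureGroup {X : Type*} (S : X × X → X × X) : Type _ :=
  PresentedGroup (ybGRels S)

/-- `a` left-divides `b`. -/
def LDvd {M : Type*} [Monoid M] (a b : M) : Prop := ∃ c, b = a * c

/-- `m` is a right lcm of the family `a`: each `a i` left-divides `m`, and `m`
left-divides every common right multiple of the `a i`. -/
def IsRightLcm {M : Type*} [Monoid M] {ι : Sort*} (a : ι → M) (m : M) : Prop :=
  (∀ i, LDvd (a i) m) ∧ ∀ w, (∀ i, LDvd (a i) w) → LDvd m w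

section Aux

variable {X : Type*} [Nonempty X] {S : X × X → X × X}

lemma g_ginv (hnd : Nondegenerate S) (x y : X) : gmap S x (ginv S x y) = y :=
  Function.rightInverse_invFun (hnd.1 x).2 y

lemma ginv_g (hnd : Nondegenerate S) (x y : X) : ginv S x (gmap S x y) = y :=
  Function.leftInverse_invFun (hnd.1 x).1 y

lemma ginv_eq (hnd : Nondegenerate S) {x y z : X} (h : gmap S x z = y) :
    ginv S x y = z := by
  subst h; exact ginv_g hnd x z

lemma inv_fst (hinv : InvolutiveSol S) (s t : X) :
    gmap S (gmap S s t) (fmap S t s) = s := by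
  have h := congrFun hinv (s, t)
  simp only [Function.comp_apply, id_eq] at h
  exact congrArg Prod.fst h

lemma braid_fst (hbr : BraidedSol S) (s t z : X) :
    gmap S (gmap S s t) (gmap S (fmap S t s) z) = gmap S s (gmap S t z) := by
  have h := congrFun hbr (s, t, z)
  simp only [Function.comp_apply, S12, S23] at h
  have h1 := congrArg Prod.fst h
  exact h1

/-- the second letter of the common right-multiple word: `(S (x, g_x⁻¹ y)).2 = g_y⁻¹ x`. -/
lemma compl_snd (hnd : Nondegenerate S) (hinv : InvolutiveSol S) (x y : X) :
    (S (x, ginv S x y)).2 = ginv S y x := by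
  have h1 : gmap S x (ginv S x y) = y := g_ginv hnd x y
  have h2 := inv_fst hinv x (ginv S x y)
  rw [h1] at h2
  exact (ginv_eq hnd h2).symm

open Classical in
/-- One step of left-reversal of a generator across a generator. -/
noncomputable def stepf (S : X × X → X × X) [Nonempty X] (s : X) (x : X) : Option X :=
  if x = s then none else some (ginv S s x)

open Classical in
lemma stepf_self (s : X) : stepf S s s = none := if_pos rfl

open Classical in
lemma stepf_of_ne {x s : X} (h : ¬ x = s) : stepf S s x = some (ginv S s x) := if_neg h

/-- Residue of a generator (or nothing) after left-reversal across a word. -/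
noncomputable def rlo (S : X × X → X × X) [Nonempty X] (o : Option X) (L : List X) :
    Option X :=
  L.foldl (fun acc s => acc.bind (stepf S s)) o

lemma rlo_nil (o : Option X) : rlo S o [] = o := rfl

lemma rlo_cons (o : Option X) (s : X) (L : List X) :
    rlo S o (s :: L) = rlo S (o.bind (stepf S s)) L := rfl

lemma rlo_none (L : List X) : rlo S none L = none := by
  induction L with
  | nil => rfl
  | cons s L ih => simpa [rlo_cons] using ih

lemma rlo_append (o : Option X) (L₁ L₂ : List X) :
    rlo S o (L₁ ++ L₂) = rlo S (rlo S o L₁) L₂ :=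
  List.foldl_append

/-- Key computation: the reversal residue across a two-letter word is invariant
under applying `S`. -/
lemma key_step (hnd : Nondegenerate S) (hinv : InvolutiveSol S) (hbr : BraidedSol S)
    (s t x : X) :
    (stepf S s x).bind (stepf S t)
      = (stepf S (gmap S s t) x).bind (stepf S (fmap S t s)) := by
  have hA : gmap S (gmap S s t) (fmap S t s) = s := inv_fst hinv s t
  by_cases h1 : x = s
  · subst h1
    rw [stepf_self, Option.bind_none]
    by_cases h2 : x = gmap S x t
    · rw [← h2, stepf_self, Option.bind_none]
    · rw [stepf_of_ne h2, Option.bind_some, ginv_eq hnd hA, stepf_self]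
  · rw [stepf_of_ne h1, Option.bind_some]
    by_cases h2 : x = gmap S s t
    · have hx : ginv S s x = t := ginv_eq hnd h2.symm
      rw [hx, stepf_self]
      rw [show stepf S (gmap S s t) x = none from by rw [h2]; exact stepf_self _]
      rw [Option.bind_none]
    · have hgt : ¬ ginv S s x = t := fun hh => h2 (by rw [← g_ginv hnd s x, hh])
      have hgt' : ¬ ginv S (gmap S s t) x = fmap S t s := fun hh =>
        h1 (by rw [← g_ginv hnd (gmap S s t) x, hh, hA])
      rw [stepf_of_ne hgt, stepf_of_ne h2, Option.bind_some, stepf_of_ne hgt']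
      have hgz : gmap S s (gmap S t (ginv S t (ginv S s x))) = x := by
        rw [g_ginv hnd, g_ginv hnd]
      have hb : gmap S (gmap S s t) (gmap S (fmap S t s) (ginv S t (ginv S s x))) = x := by
        rw [braid_fst hbr]; exact hgz
      rw [ginv_eq hnd hb, ginv_g hnd]

lemma key_rel (hnd : Nondegenerate S) (hinv : InvolutiveSol S) (hbr : BraidedSol S)
    {a b : FreeMonoid X} (hr : ybRel S a b) (o : Option X) :
    rlo S o a = rlo S o b := by
  obtain ⟨s, t, rfl, rfl⟩ := hr
  cases o with
  | none => exact (rlo_none (S := S) _).trans (rlo_none _).symm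
  | some x =>
    show rlo S ((some x).bind (stepf S s)) [t]
        = rlo S ((some x).bind (stepf S (S (s, t)).1)) [(S (s, t)).2]
    show ((some x).bind (stepf S s)).bind (stepf S t)
        = ((some x).bind (stepf S (S (s, t)).1)).bind (stepf S (S (s, t)).2)
    rw [Option.bind_some, Option.bind_some]
    exact key_step hnd hinv hbr s t x

lemma rlo_congr (hnd : Nondegenerate S) (hinv : InvolutiveSol S) (hbr : BraidedSol S)
    {a b : FreeMonoid X} (h : conGen (ybRel S) a b) :
    ∀ o : Option X, rlo S o a = rlo S o b := by
  have h' : ConGen.Rel (ybRel S) a b := h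
  clear h
  induction h' with
  | of u v huv => exact key_rel hnd hinv hbr huv
  | refl u => exact fun o => rfl
  | symm _ ih => exact fun o => (ih o).symm
  | trans _ _ ih1 ih2 => exact fun o => (ih1 o).trans (ih2 o)
  | @mul w u v z _ _ ih1 ih2 =>
    intro o
    calc rlo S o (w * v) = rlo S (rlo S o w) v := rlo_append o w v
      _ = rlo S (rlo S o u) z := by rw [ih1, ih2]
      _ = rlo S o (u * z) := (rlo_append o u z).symm

/-- If the residue of `a` across `v` vanishes, then `a` explicitly left-divides `v`. -/
lemma exists_head (hnd : Nondegenerate S) (v : List X) :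
    ∀ a : X, rlo S (some a) v = none →
      ∃ w : List X, ConGen.Rel (ybRel S) v (a :: w) := by
  induction v with
  | nil => intro a h; exact absurd h (by simp [rlo_nil])
  | cons s v' ih =>
    intro a h
    by_cases has : a = s
    · exact ⟨v', has ▸ ConGen.Rel.refl _⟩
    · have h' : rlo S (some (ginv S s a)) v' = none := by
        rw [rlo_cons, Option.bind_some, stepf, if_neg has] at h
        exact h
      obtain ⟨w', hw'⟩ := ih (ginv S s a) h'
      refine ⟨(S (s, ginv S s a)).2 :: w', ?_⟩
      have step1 : ConGen.Rel (ybRel S) ((s :: v' : List X))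
          ((s :: ginv S s a :: w' : List X)) :=
        ConGen.Rel.mul (ConGen.Rel.refl (FreeMonoid.of s)) hw'
      have hrel : ybRel S (FreeMonoid.of s * FreeMonoid.of (ginv S s a))
          (FreeMonoid.of (S (s, ginv S s a)).1 * FreeMonoid.of (S (s, ginv S s a)).2) :=
        ⟨s, ginv S s a, rfl, rfl⟩
      have step2 : ConGen.Rel (ybRel S) ((s :: ginv S s a :: w' : List X))
          ((a :: (S (s, ginv S s a)).2 :: w' : List X)) := by
        have h2 := ConGen.Rel.mul (ConGen.Rel.of _ _ hrel)
          (ConGen.Rel.refl (FreeMonoid.ofList w'))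
        have e1 : (S (s, ginv S s a)).1 = a := g_ginv hnd s a
        rw [e1] at h2
        exact h2
      exact step1.trans step2

end Aux

/-- In the structure monoid, for distinct `x, y ∈ X` one has
`x·g_x⁻¹(y) = y·g_y⁻¹(x)`, and this common element is a right lcm of `x` and `y`;
in particular the right lcm of two generators is represented by a word of length two and the
right complement of one generator on another is again a generator. -/
theorem stmt4 {X : Type*} [Finite X] [Nonempty X] (S : X × X → X × X)
    (hnd : Nondegenerate S) (hinv : InvolutiveSol S) (hbr : BraidedSol S) :
    ∀ x y : X, x ≠ y →
      smi S x * smi S (ginv S x y) = smi S y * smi S (ginv S y x) ∧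
      IsRightLcm (fun b : Bool => if b then smi S x else smi S y)
        (smi S x * smi S (ginv S x y)) := by
  intro x y hxy
  have e1 : (S (x, ginv S x y)).1 = y := g_ginv hnd x y
  have e2 : (S (x, ginv S x y)).2 = ginv S y x := compl_snd hnd hinv x y
  have hrelA : ybRel S (FreeMonoid.of x * FreeMonoid.of (ginv S x y))
      (FreeMonoid.of y * FreeMonoid.of (ginv S y x)) :=
    ⟨x, ginv S x y, rfl, by rw [e1, e2]⟩
  have heq : smi S x * smi S (ginv S x y) = smi S y * smi S (ginv S y x) := by
    have h := (Con.eq (conGen (ybRel S))).mpr (ConGen.Rel.of _ _ hrelA :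
      conGen (ybRel S) (FreeMonoid.of x * FreeMonoid.of (ginv S x y))
        (FreeMonoid.of y * FreeMonoid.of (ginv S y x)))
    have h' : (conGen (ybRel S)).mk' (FreeMonoid.of x * FreeMonoid.of (ginv S x y))
        = (conGen (ybRel S)).mk' (FreeMonoid.of y * FreeMonoid.of (ginv S y x)) := h
    rw [map_mul, map_mul] at h'
    exact h'
  refine ⟨heq, ?_, ?_⟩
  · intro i
    cases i with
    | true => exact ⟨smi S (ginv S x y), by simp⟩
    | false => exact ⟨smi S (ginv S y x), by simp [heq]⟩
  · intro w hw
    obtain ⟨c, hc⟩ := hw true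
    obtain ⟨d, hd⟩ := hw false
    simp only [eq_self_iff_true, Bool.false_eq_true, if_true, if_false] at hc hd
    obtain ⟨u, hu⟩ := Con.mk'_surjective c
    obtain ⟨v, hv⟩ := Con.mk'_surjective d
    have hxu : w = (conGen (ybRel S)).mk' (FreeMonoid.of x * u) := by
      rw [map_mul, hu]; exact hc
    have hyv : w = (conGen (ybRel S)).mk' (FreeMonoid.of y * v) := by
      rw [map_mul, hv]; exact hd
    have hcon : conGen (ybRel S) (FreeMonoid.of x * u) (FreeMonoid.of y * v) :=
      (Con.eq (conGen (ybRel S))).mp (hxu.symm.trans hyv)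
    have h0 : rlo S (some x) (FreeMonoid.of x * u) = none := by
      show rlo S ((some x).bind (stepf S x)) u = none
      rw [Option.bind_some, stepf_self]; exact rlo_none _
    have h2 : rlo S (some (ginv S y x)) v = none := by
      have h3 := rlo_congr hnd hinv hbr hcon (some x)
      rw [h0] at h3
      have h4 : rlo S (some x) (FreeMonoid.of y * v)
          = rlo S (some (ginv S y x)) v := by
        show rlo S ((some x).bind (stepf S y)) v = _
        rw [Option.bind_some, stepf_of_ne hxy]
      rw [h4] at h3
      exact h3.symm
    obtain ⟨w', hw'⟩ := exists_head hnd v (ginv S y x) h2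
    have c1 : ConGen.Rel (ybRel S) (FreeMonoid.of y * v)
        (FreeMonoid.ofList (y :: ginv S y x :: w')) :=
      ConGen.Rel.mul (ConGen.Rel.refl (FreeMonoid.of y)) hw'
    have e1' : (S (y, ginv S y x)).1 = x := g_ginv hnd y x
    have e2' : (S (y, ginv S y x)).2 = ginv S x y := compl_snd hnd hinv y x
    have hrelB : ybRel S (FreeMonoid.of y * FreeMonoid.of (ginv S y x))
        (FreeMonoid.of x * FreeMonoid.of (ginv S x y)) :=
      ⟨y, ginv S y x, rfl, by rw [e1', e2']⟩
    have c2 : ConGen.Rel (ybRel S) (FreeMonoid.ofList (y :: ginv S y x :: w'))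
        (FreeMonoid.ofList (x :: ginv S x y :: w')) :=
      ConGen.Rel.mul (ConGen.Rel.of _ _ hrelB) (ConGen.Rel.refl (FreeMonoid.ofList w'))
    refine ⟨(conGen (ybRel S)).mk' (FreeMonoid.ofList w'), ?_⟩
    calc w = (conGen (ybRel S)).mk' (FreeMonoid.of y * v) := hyv
      _ = (conGen (ybRel S)).mk' (FreeMonoid.ofList (x :: ginv S x y :: w')) :=
        (Con.eq (conGen (ybRel S))).mpr (c1.trans c2)
      _ = smi S x * smi S (ginv S x y) * (conGen (ybRel S)).mk' (FreeMonoid.ofList w') := by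
        have h5 : (conGen (ybRel S)).mk'
              (FreeMonoid.of x * FreeMonoid.of (ginv S x y) * FreeMonoid.ofList w')
            = (conGen (ybRel S)).mk' (FreeMonoid.of x)
              * (conGen (ybRel S)).mk' (FreeMonoid.of (ginv S x y))
              * (conGen (ybRel S)).mk' (FreeMonoid.ofList w') := by
          rw [map_mul, map_mul]
        exact h5
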